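/- Let V ⊆ ℂ be open, let z ∈ V, let μ : V → ℂ be twice differentiable at z with μ′(z) ≠ 0, and let ψ and a be complex-valued functions differentiable at μ(z), with ψ and a defined and differentiable on a neighborhood of μ(z). Define near z the functions ψ̃ := (ψ∘μ)·(μ′)² and ã := (a∘μ)/μ′. Then at z: ψ̃′·ã + 2·ψ̃·ã′ = ((ψ′·a + 2·ψ·a′)∘μ)·(μ′)². -/

import Mathlib

/-- under a coordinate change f = μ(g), with
ψ̃ := (ψ∘μ)·(μ′)² and ã := (a∘μ)/μ′, at z one has
ψ̃′·ã + 2·ψ̃·ã′ = ((ψ′·a + 2·ψ·a′)∘μ)·(μ′)²,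
i.e. the local expressions for d_ψ glue under coordinate changes. -/
theorem stmt12 (V : Set ℂ) (hV : IsOpen V) (z : ℂ) (hz : z ∈ V)
    (μ ψ a : ℂ → ℂ)
    (hμ : ∀ w ∈ V, DifferentiableAt ℂ μ w)
    (hμ' : DifferentiableAt ℂ (deriv μ) z)
    (hμz : deriv μ z ≠ 0)
    (hψ : ∀ᶠ w in nhds (μ z), DifferentiableAt ℂ ψ w)
    (ha : ∀ᶠ w in nhds (μ z), DifferentiableAt ℂ a w)
    (ψt aTilde : ℂ → ℂ)
    (hψt : ∀ w, ψt w = ψ (μ w) * (deriv μ w) ^ 2)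
    (haT : ∀ w, aTilde w = a (μ w) / deriv μ w) :
    deriv ψt z * aTilde z + 2 * ψt z * deriv aTilde z
      = (deriv ψ (μ z) * a (μ z) + 2 * ψ (μ z) * deriv a (μ z)) * (deriv μ z) ^ 2 := by
  have hμd : DifferentiableAt ℂ μ z := hμ z hz
  have hψd : DifferentiableAt ℂ ψ (μ z) := hψ.self_of_nhds
  have had : DifferentiableAt ℂ a (μ z) := ha.self_of_nhds
  have hc1 : DifferentiableAt ℂ (fun w => ψ (μ w)) z := hψd.comp z hμd
  have hc2 : DifferentiableAt ℂ (fun w => a (μ w)) z := had.comp z hμd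
  have hd1 : deriv (fun w => ψ (μ w)) z = deriv ψ (μ z) * deriv μ z := by
    rw [show (fun w => ψ (μ w)) = ψ ∘ μ from rfl, deriv_comp (x := z) hψd hμd]
  have hd2 : deriv (fun w => a (μ w)) z = deriv a (μ z) * deriv μ z := by
    rw [show (fun w => a (μ w)) = a ∘ μ from rfl, deriv_comp (x := z) had hμd]
  have hpow : DifferentiableAt ℂ (fun w => (deriv μ w) ^ 2) z := hμ'.pow 2
  have hdpow : deriv (fun w => (deriv μ w) ^ 2) z
      = 2 * deriv μ z * deriv (deriv μ) z := by
    rw [show (fun w => (deriv μ w) ^ 2) = deriv μ ^ 2 from rfl, deriv_pow hμ' 2]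
    push_cast
    ring
  have h1 : deriv ψt z = (deriv ψ (μ z) * deriv μ z) * (deriv μ z) ^ 2
      + ψ (μ z) * (2 * deriv μ z * deriv (deriv μ) z) := by
    rw [funext hψt, deriv_fun_mul hc1 hpow, hd1, hdpow]
  have h2 : deriv aTilde z
      = (deriv a (μ z) * deriv μ z * deriv μ z - a (μ z) * deriv (deriv μ) z)
        / (deriv μ z) ^ 2 := by
    rw [funext haT, deriv_fun_div hc2 hμ' hμz, hd2]
  rw [h1, h2, hψt z, haT z]
  field_simp
  ring
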